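/- Let 𝒯 = {𝒯⁽¹⁾,…,𝒯⁽ᵏ⁾} be a set of k rooted phylogenetic trees in which every node has degree at most D. For every sub-forest 𝒜 of 𝒯 and every integer d with 2 ≤ d ≤ kD, the number of decompositions (ℬ₁,…,ℬ_d) of 𝒜 into d sub-forests is less than (d+2)^{kD}; more precisely, for each s ≤ k the number of possible sequences (ℬ₁⁽ˢ⁾,…,ℬ_d⁽ˢ⁾) is at most (d+1)^D + d < (d+2)^D. -/

import Mathlib

/-- Rooted, unordered, leaf-labelled trees:
a tree is a single labelled leaf, or an (internal) root node with a list of subtrees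
attached to it.  Being unordered, such trees are considered up to the
isomorphism `PTree.Iso` below.  The empty tree is represented by `none` in
`Option (PTree α)`. -/
inductive PTree (α : Type) : Type where
  | leaf : α → PTree α
  | node : List (PTree α) → PTree α

namespace PTree

variable {α : Type} [DecidableEq α]

theorem sizeOf_lt_of_mem {α : Type} {c : PTree α} {cs : List (PTree α)}
    (h : c ∈ cs) : sizeOf c < sizeOf (PTree.node cs) := by
  have := List.sizeOf_lt_of_mem h
  simp only [node.sizeOf_spec]; omega

/-- `Subtree s t` : `s` is the complete subtree rooted at some node of `t`. -/
inductive Subtree : PTree α → PTree α → Prop where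
  | refl (t : PTree α) : Subtree t t
  | child {s c : PTree α} {cs : List (PTree α)} :
      c ∈ cs → Subtree s c → Subtree s (node cs)

/-- The list of leaf labels of a tree. -/
def labelList : PTree α → List α
  | leaf a => [a]
  | node cs => cs.attach.flatMap (fun c => labelList c.1)
decreasing_by exact sizeOf_lt_of_mem c.2

/-- The set `L(T)` of leaf labels of a tree. -/
def labels (t : PTree α) : Finset α := t.labelList.toFinset

/-- The size of a tree: the number of its leaves. -/
def treeSize (t : PTree α) : ℕ := t.labels.card

/-- The label set of a possibly empty tree. -/
def olabels : Option (PTree α) → Finset α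
  | none => ∅
  | some t => t.labels

/-- Connecting a list of trees by a common root.  The empty list yields the
empty tree and a single tree yields that tree itself (no degree-two node is
created). -/
def connect : List (PTree α) → Option (PTree α)
  | [] => none
  | [t] => some t
  | ts => some (node ts)

/-- The restriction `T|S` of `T` to a label set `S`: all leaves with labels
outside `S` are removed and all internal nodes of degree two are suppressed. -/
def restrict (S : Finset α) : PTree α → Option (PTree α)
  | leaf a => if a ∈ S then some (leaf a) else none
  | node cs => connect ((cs.attach.map (fun c => restrict S c.1)).reduceOption)
decreasing_by exact sizeOf_lt_of_mem c.2

/-- Restriction of a possibly empty tree. -/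
def orestrict (S : Finset α) (t : Option (PTree α)) : Option (PTree α) :=
  t.bind (restrict S)

/-- Isomorphism (equality) of unordered leaf-labelled trees: equality of trees
up to reordering of the children of each node. -/
inductive Iso : PTree α → PTree α → Prop where
  | leaf (a : α) : Iso (leaf a) (leaf a)
  | node {cs ds ds' : List (PTree α)} :
      List.Forall₂ Iso cs ds' → ds'.Perm ds → Iso (node cs) (node ds)

/-- One edge contraction: the edge between a node and one of its (internal)
children is contracted, merging the child into the parent. -/
inductive Contract : PTree α → PTree α → Prop where
  | top (l r ds : List (PTree α)) :
      Contract (node (l ++ node ds :: r)) (node (l ++ ds ++ r))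
  | child {c c' : PTree α} (l r : List (PTree α)) :
      Contract c c' → Contract (node (l ++ c :: r)) (node (l ++ c' :: r))

/-- `T` refines `T'` (written `T ⊵ T'`): `T'` can be obtained (as an
unordered tree) by contracting some edges of `T`. -/
def Refines (t t' : PTree α) : Prop :=
  ∃ u, Relation.ReflTransGen Contract t u ∧ Iso u t'

/-- Refinement of possibly empty trees. -/
def ORefines : Option (PTree α) → Option (PTree α) → Prop
  | none, none => True
  | some a, some b => Refines a b
  | _, _ => False

/-- Isomorphism (equality) of possibly empty unordered trees. -/
def OIso : Option (PTree α) → Option (PTree α) → Prop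
  | none, none => True
  | some a, some b => Iso a b
  | _, _ => False

/-- A possibly empty tree is (empty or) a complete subtree of `T`. -/
def OSubtree (T : PTree α) : Option (PTree α) → Prop
  | none => True
  | some t => Subtree t T

/-- No internal node of degree two (after the usual suppression convention):
every internal node of the rooted tree has at least two children. -/
def NoUnaryNodes (T : PTree α) : Prop :=
  ∀ cs : List (PTree α), Subtree (node cs) T → 2 ≤ cs.length

/-- Every node of the rooted tree has degree at most `D` (the degree of the
root is its number of children; the degree of any other internal node is its
number of children plus one). -/
def DegLE (D : ℕ) (T : PTree α) : Prop :=
  (∀ cs : List (PTree α), T = node cs → cs.length ≤ D) ∧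
  (∀ cs : List (PTree α), Subtree (node cs) T → node cs ≠ T → cs.length + 1 ≤ D)

/-- A rooted tree is binary if every internal node has exactly two children. -/
def Binary (T : PTree α) : Prop :=
  ∀ cs : List (PTree α), Subtree (node cs) T → cs.length = 2

/-- A cut-subtree of `T`: the empty tree, or the tree obtained by selecting
some (at least one) of the subtrees attached to an internal node of `T` and
connecting those subtrees by a common root. -/
def IsCutSubtree (T : PTree α) (a : Option (PTree α)) : Prop :=
  a = none ∨ ∃ cs sel : List (PTree α),
    Subtree (node cs) T ∧ sel.Sublist cs ∧ sel ≠ [] ∧ a = connect sel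

variable {k : ℕ}

/-- A cut-subforest of `𝒯`: each component is a cut-subtree of the
corresponding tree, and at least one component is nonempty. -/
def IsCutSubforest (𝒯 : Fin k → PTree α) (A : Fin k → Option (PTree α)) : Prop :=
  (∀ i, IsCutSubtree (𝒯 i) (A i)) ∧ ∃ i, A i ≠ none

/-- A sub-forest of `𝒯`: each component is the empty tree or a complete
subtree rooted at some node of the corresponding tree, and at least one
component is nonempty. -/
def IsSubForest (𝒯 : Fin k → PTree α) (A : Fin k → Option (PTree α)) : Prop :=
  (∀ i, OSubtree (𝒯 i) (A i)) ∧ ∃ i, A i ≠ none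

/-- The set of all labels occurring in the trees of `𝒯`. -/
def allLabels (𝒯 : Fin k → PTree α) : Finset α :=
  Finset.univ.biUnion fun i => (𝒯 i).labels

/-- A (cut-sub)forest is terminal if each component is the empty tree or a
single leaf of the corresponding tree. -/
def IsTerminal (𝒯 : Fin k → PTree α) (A : Fin k → Option (PTree α)) : Prop :=
  ∀ i, A i = none ∨ ∃ a : α, A i = some (leaf a) ∧ Subtree (leaf a) (𝒯 i)

/-- `Λ(𝒜) = { l ∈ ⋃_j L(𝒜⁽ʲ⁾) ∣ ∀ i, l ∉ L(𝒯⁽ⁱ⁾) − L(𝒜⁽ⁱ⁾) }`. -/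
def lambdaSet (𝒯 : Fin k → PTree α) (A : Fin k → Option (PTree α)) : Finset α :=
  (Finset.univ.biUnion fun j => olabels (A j)).filter
    fun l => ∀ i, l ∉ (𝒯 i).labels \ olabels (A i)

/-- `Y` is a compatible supertree of the forest `A`:
`Y|L(A⁽ⁱ⁾) ⊵ A⁽ⁱ⁾|L(Y)` for every `i`. -/
def IsCompatibleSupertree (A : Fin k → Option (PTree α)) (Y : PTree α) : Prop :=
  ∀ i, ORefines (restrict (olabels (A i)) Y) (orestrict Y.labels (A i))

/-- `X` is an agreement supertree of the forest `A`:
`X|L(A⁽ⁱ⁾) = A⁽ⁱ⁾|L(X)` (as unordered trees) for every `i`. -/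
def IsAgreementSupertree (A : Fin k → Option (PTree α)) (X : PTree α) : Prop :=
  ∀ i, OIso (restrict (olabels (A i)) X) (orestrict X.labels (A i))

/-- An embedded supertree of a cut-subforest `A` of `𝒯`: a distinctly
leaf-labelled compatible supertree `Y` of `A`, with leaves labelled by labels
of `𝒯`, such that `L(Y) ∩ L(𝒯⁽ⁱ⁾) ⊆ L(A⁽ⁱ⁾)` for all `i`. -/
def IsEmbeddedSupertree (𝒯 : Fin k → PTree α) (A : Fin k → Option (PTree α))
    (Y : PTree α) : Prop :=
  Y.labelList.Nodup ∧ Y.labels ⊆ allLabels 𝒯 ∧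
  IsCompatibleSupertree A Y ∧
  ∀ i, Y.labels ∩ (𝒯 i).labels ⊆ olabels (A i)

/-- An enclosed supertree of a sub-forest `A` of `𝒯`: a distinctly
leaf-labelled agreement supertree `X` of `A`, with leaves labelled by labels
of `𝒯`, such that `L(X) ∩ L(𝒯⁽ⁱ⁾) ⊆ L(A⁽ⁱ⁾)` for all `i`. -/
def IsEnclosedSupertree (𝒯 : Fin k → PTree α) (A : Fin k → Option (PTree α))
    (X : PTree α) : Prop :=
  X.labelList.Nodup ∧ X.labels ⊆ allLabels 𝒯 ∧
  IsAgreementSupertree A X ∧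
  ∀ i, X.labels ∩ (𝒯 i).labels ⊆ olabels (A i)

/-- `mcsp 𝒯 A` : the maximum size of an embedded supertree of `A`. -/
noncomputable def mcsp (𝒯 : Fin k → PTree α) (A : Fin k → Option (PTree α)) : ℕ :=
  sSup {m : ℕ | ∃ Y : PTree α, IsEmbeddedSupertree 𝒯 A Y ∧ m = Y.treeSize}

/-- `masp 𝒯 A` : the maximum size of an enclosed supertree of `A`. -/
noncomputable def masp (𝒯 : Fin k → PTree α) (A : Fin k → Option (PTree α)) : ℕ :=
  sSup {m : ℕ | ∃ X : PTree α, IsEnclosedSupertree 𝒯 A X ∧ m = X.treeSize}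

end PTree

/-- `ListSplit s l r` : the list `s` is partitioned into the two
(complementary) sublists `l` and `r`. -/
inductive ListSplit {β : Type} : List β → List β → List β → Prop where
  | nil : ListSplit [] [] []
  | left {s l r : List β} (x : β) : ListSplit s l r → ListSplit (x :: s) (x :: l) r
  | right {s l r : List β} (x : β) : ListSplit s l r → ListSplit (x :: s) l (x :: r)

namespace PTree

variable {α : Type} [DecidableEq α] {k : ℕ}

/-- `(AL, AR)` is a bipartite of the forest `A`: for every `i` the set of
subtrees attached to the root of `A⁽ⁱ⁾` is partitioned into two sets, each of
which is connected by a common root to form `AL⁽ⁱ⁾` resp. `AR⁽ⁱ⁾` (an empty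
set of subtrees yielding the empty tree). -/
def IsBipartite (A AL AR : Fin k → Option (PTree α)) : Prop :=
  ∀ i, ∃ s sL sR : List (PTree α),
    A i = connect s ∧ ListSplit s sL sR ∧ AL i = connect sL ∧ AR i = connect sR

/-- Condition, at one component, for `(b 1, …, b d)` to decompose `a`:
either exactly one `b j` is isomorphic to `a` and the others are empty, or at
least two of the `b j` are nonempty and the nonempty ones are isomorphic to
pairwise distinct subtrees attached to the root of `a`. -/
def DecompAt {d : ℕ} (a : Option (PTree α)) (b : Fin d → Option (PTree α)) : Prop :=
  (∃ j, OIso (b j) a ∧ ∀ j', j' ≠ j → b j' = none) ∨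
  (∃ cs : List (PTree α), a = some (node cs) ∧
    2 ≤ (Finset.univ.filter fun j => (b j).isSome).card ∧
    ∃ idx : Fin d → Option (Fin cs.length),
      (∀ j, b j = none ↔ idx j = none) ∧
      (∀ j t m, b j = some t → idx j = some m → Iso t (cs.get m)) ∧
      (∀ j j' m, idx j = some m → idx j' = some m → j = j'))

/-- `(B 1, …, B d)` is a decomposition of the forest `A` (each `B j` being a
possibly empty sub-forest of `𝒯`). -/
def IsDecomposition (𝒯 : Fin k → PTree α) (A : Fin k → Option (PTree α))
    (d : ℕ) (B : Fin d → Fin k → Option (PTree α)) : Prop :=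
  2 ≤ d ∧ (∀ j i, OSubtree (𝒯 i) (B j i)) ∧ ∀ i, DecompAt (A i) fun j => B j i

/-- The root of the (nonempty) cut-subtree `a` is an internal node of `T`,
i.e. `a` is the complete subtree of `T` rooted at an internal node of `T`. -/
def InternalRooted (T : PTree α) : Option (PTree α) → Prop
  | none => False
  | some t => (∃ cs : List (PTree α), t = node cs) ∧ Subtree t T

/-- One rerooting step: the root is moved to an adjacent internal node. -/
inductive Reroot1 : PTree α → PTree α → Prop where
  | step (l r ds : List (PTree α)) :
      Reroot1 (node (l ++ node ds :: r)) (node (ds ++ [node (l ++ r)]))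

/-- `F` is a rooted variant of the unrooted tree (represented by) `T`:
`F` is obtained by rooting `T` at some internal node. -/
def RootedVariant (T F : PTree α) : Prop := Relation.ReflTransGen Reroot1 T F

/-- A maximal subtree of the unrooted tree (represented by) `T`: a rooted tree
obtained by first rooting `T` at some internal node and then removing at most
one nontrivial subtree attached to that node. -/
def IsMaximalSubtree (T A : PTree α) : Prop :=
  ∃ cs : List (PTree α), RootedVariant T (node cs) ∧
    (A = node cs ∨ ∃ l r ds : List (PTree α), cs = l ++ node ds :: r ∧ A = node (l ++ r))

/-- `T` (a rooted tree, rooted at an internal node) represents an unrooted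
tree without vertices of degree two: the root has at least three neighbours
and every other internal vertex has at least three neighbours as well. -/
def IsUnrootedRep (T : PTree α) : Prop :=
  (∃ cs : List (PTree α), T = node cs ∧ 3 ≤ cs.length) ∧
  ∀ cs : List (PTree α), Subtree (node cs) T → node cs ≠ T → 2 ≤ cs.length

-- ### aux lemmas

theorem labelList_node (cs : List (PTree α)) :
    (node cs).labelList = cs.flatMap labelList := by
  rw [labelList]
  conv_rhs => rw [← List.attach_map_subtype_val cs]
  rw [List.flatMap_map]

theorem Subtree.trans {s t T : PTree α} (h1 : Subtree s t) (h2 : Subtree t T) :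
    Subtree s T := by
  induction h2 with
  | refl => exact h1
  | child hm _ ih => exact Subtree.child hm ih

theorem labelList_sublist_of_mem {c : PTree α} {cs : List (PTree α)} (h : c ∈ cs) :
    c.labelList.Sublist (node cs).labelList := by
  rw [labelList_node]
  obtain ⟨l, r, rfl⟩ := List.append_of_mem h
  rw [List.flatMap_append, List.flatMap_cons]
  exact ((List.sublist_append_left _ _).trans (List.sublist_append_right _ _))

theorem labelList_sublist {u T : PTree α} (h : Subtree u T) :
    u.labelList.Sublist T.labelList := by
  induction h with
  | refl => exact List.Sublist.refl _
  | child hm _ ih => exact ih.trans (labelList_sublist_of_mem hm)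

theorem labelList_ne_nil {T : PTree α} (hnu : NoUnaryNodes T) :
    ∀ {u : PTree α}, Subtree u T → u.labelList ≠ [] := by
  intro u
  induction u using PTree.rec (motive_2 := fun cs => ∀ c ∈ cs, Subtree c T → c.labelList ≠ []) with
  | leaf a => intro _; simp [labelList]
  | node cs ih =>
    intro hsub
    have h2 : 2 ≤ cs.length := hnu cs hsub
    obtain ⟨c, hc⟩ : ∃ c, c ∈ cs := by
      cases cs with
      | nil => simp at h2
      | cons c cs => exact ⟨c, List.mem_cons_self ..⟩
    have hne := ih c hc ((Subtree.child hc (Subtree.refl c)).trans hsub)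
    have hsl := labelList_sublist_of_mem hc
    intro hnil
    rw [hnil, List.sublist_nil] at hsl
    exact hne hsl
  | nil =>
    rename_i _ hc _
    simp at hc
  | cons c cs ihc ihcs =>
    rename_i x hx hs
    rcases List.mem_cons.1 hx with rfl | hx
    · exact ihc hs
    · exact ihcs x hx hs

theorem perm_flatMap_of_forall₂ {l1 l2 : List (PTree α)}
    (hmem : ∀ c ∈ l1, ∀ v, Iso c v → c.labelList.Perm v.labelList)
    (hf : List.Forall₂ Iso l1 l2) :
    (l1.flatMap labelList).Perm (l2.flatMap labelList) := by
  induction hf with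
  | nil => simp
  | cons ha hf ih =>
    rename_i a b t1 t2
    rw [List.flatMap_cons, List.flatMap_cons]
    exact (hmem a (List.mem_cons_self ..) b ha).append
      (ih fun c hc => hmem c (List.mem_cons_of_mem _ hc))

theorem iso_perm {u v : PTree α} (h : Iso u v) : u.labelList.Perm v.labelList := by
  induction u using PTree.rec
      (motive_2 := fun cs => ∀ c ∈ cs, ∀ v, Iso c v → c.labelList.Perm v.labelList)
      generalizing v with
  | leaf a => cases h; exact List.Perm.refl _
  | node cs ih =>
    cases h with
    | node hf hp =>
      rw [labelList_node, labelList_node]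
      exact (perm_flatMap_of_forall₂ ih hf).trans (hp.flatMap_right labelList)
  | nil =>
    rename_i _ hc _ _
    simp at hc
  | cons c cs ihc ihcs =>
    rename_i x hx w hw
    rcases List.mem_cons.1 hx with rfl | hx
    · exact ihc hw
    · exact ihcs x hx w hw

theorem noUnary_subtree {T c : PTree α} (hnu : NoUnaryNodes T) (hc : Subtree c T) :
    NoUnaryNodes c := fun ds hsub => hnu ds (hsub.trans hc)

theorem not_proper {cs : List (PTree α)} {c v : PTree α}
    (hnu : NoUnaryNodes (node cs)) (hc : c ∈ cs) (hv : Subtree v c)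
    (hperm : (node cs).labelList.Perm v.labelList) : False := by
  have h2 : 2 ≤ cs.length := hnu cs (Subtree.refl _)
  obtain ⟨l, r, rfl⟩ := List.append_of_mem hc
  obtain ⟨x, hx⟩ : ∃ x, x ∈ l ∨ x ∈ r := by
    rcases l with _ | ⟨y, l⟩
    · rcases r with _ | ⟨y, r⟩
      · simp at h2
      · exact ⟨y, Or.inr (List.mem_cons_self ..)⟩
    · exact ⟨y, Or.inl (List.mem_cons_self ..)⟩
  have hxmem : x ∈ l ++ c :: r := by
    rcases hx with hx | hx
    · exact List.mem_append_left _ hx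
    · exact List.mem_append_right _ (List.mem_cons_of_mem _ hx)
  have hxne := labelList_ne_nil hnu (Subtree.child hxmem (Subtree.refl x))
  have hxlen : 1 ≤ x.labelList.length := by
    cases hxl : x.labelList with
    | nil => exact absurd hxl hxne
    | cons a t => simp
  have hvlen : v.labelList.length ≤ c.labelList.length :=
    (labelList_sublist hv).length_le
  have htot : (node (l ++ c :: r)).labelList.length =
      (l.flatMap labelList).length + c.labelList.length + (r.flatMap labelList).length := by
    rw [labelList_node, List.flatMap_append, List.flatMap_cons]
    simp [List.length_append]; omega
  have hxin : x.labelList.length ≤ (l.flatMap labelList).length + (r.flatMap labelList).length := by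
    rcases hx with hx | hx
    · have h := labelList_sublist_of_mem hx
      rw [labelList_node] at h
      exact le_trans h.length_le (Nat.le_add_right _ _)
    · have h := labelList_sublist_of_mem hx
      rw [labelList_node] at h
      exact le_trans h.length_le (Nat.le_add_left _ _)
  have hpl := hperm.length_eq
  omega

theorem subtree_unique_aux (n : ℕ) : ∀ (T : PTree α), sizeOf T ≤ n → T.labelList.Nodup →
    NoUnaryNodes T → ∀ {u v : PTree α}, Subtree u T → Subtree v T → Iso u v → u = v := by
  induction n with
  | zero =>
    intro T hsz
    cases T <;> simp at hsz
  | succ n IH =>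
    intro T hsz hT hnu u v hu hv hiso
    cases hu with
    | refl =>
      cases hv with
      | refl => rfl
      | child hc hs => exact (not_proper hnu hc hs (iso_perm hiso)).elim
    | child hc hs =>
      cases hv with
      | refl => exact (not_proper hnu hc hs (iso_perm hiso).symm).elim
      | child hc' hs' =>
        rename_i c cs c'
        by_cases hcc : c = c'
        · subst hcc
          have hlt : sizeOf c < sizeOf (node cs) := sizeOf_lt_of_mem hc
          exact IH c (by omega) ((labelList_sublist_of_mem hc).nodup hT)
            (noUnary_subtree hnu (Subtree.child hc (Subtree.refl c))) hs hs' hiso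
        · exfalso
          have hnd : (cs.flatMap labelList).Nodup := by rwa [labelList_node] at hT
          have hpw : List.Pairwise (Function.onFun List.Disjoint labelList) cs :=
            (List.nodup_flatMap.1 hnd).2
          have hdisj : List.Disjoint c.labelList c'.labelList :=
            haveI : Std.Symm (Function.onFun List.Disjoint labelList) :=
              ⟨fun a b h => List.Disjoint.symm h⟩
            @List.Pairwise.forall _ _ _ this hpw _ hc _ hc' hcc
          have hune := labelList_ne_nil hnu (Subtree.child hc hs)
          obtain ⟨x, hx⟩ := List.exists_mem_of_ne_nil _ hune
          have hxc : x ∈ c.labelList := (labelList_sublist hs).subset hx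
          have hxv : x ∈ v.labelList := (iso_perm hiso).subset hx
          have hxc' : x ∈ c'.labelList := (labelList_sublist hs').subset hxv
          exact hdisj hxc hxc'

theorem subtree_unique (T : PTree α) (hT : T.labelList.Nodup) (hnu : NoUnaryNodes T)
    {u v : PTree α} (hu : Subtree u T) (hv : Subtree v T) (hiso : Iso u v) : u = v :=
  subtree_unique_aux (sizeOf T) T le_rfl hT hnu hu hv hiso


open Classical in
/-- Witness map: each component sequence of a decomposition is in the image of this map. -/
noncomputable def bOf (d D : ℕ) (a : Option (PTree α)) :
    (Fin D → Option (Fin d)) ⊕ Fin d → Fin d → Option (PTree α)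
  | .inr j => fun j' => if j' = j then a else none
  | .inl g =>
    match a with
    | some (.node cs) => fun j =>
        if h : ∃ m : Fin D, g m = some j ∧ (m : ℕ) < cs.length then
          some (cs.get ⟨h.choose, h.choose_spec.2⟩)
        else none
    | _ => fun _ => none

theorem cover {d D : ℕ} (T : PTree α) (hT : T.labelList.Nodup)
    (hnu : NoUnaryNodes T) (hDle : DegLE D T) {a : Option (PTree α)} (ha : OSubtree T a)
    {b : Fin d → Option (PTree α)} (hb1 : ∀ j, OSubtree T (b j)) (hb2 : DecompAt a b) :
    ∃ w, bOf d D a w = b := by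
  classical
  rcases hb2 with ⟨j, hiso, hrest⟩ | ⟨cs, rfl, _, idx, hidx1, hidx2, hidx3⟩
  · refine ⟨.inr j, funext fun j' => ?_⟩
    show (if j' = j then a else none) = b j'
    by_cases hj : j' = j
    · subst hj
      rw [if_pos rfl]
      cases ha' : a with
      | none =>
        rw [ha'] at hiso
        cases hbj : b j' with
        | none => rfl
        | some u => rw [hbj] at hiso; exact absurd hiso (by simp [OIso])
      | some t =>
        rw [ha'] at hiso ha
        cases hbj : b j' with
        | none => rw [hbj] at hiso; exact absurd hiso (by simp [OIso])
        | some u =>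
          rw [hbj] at hiso
          have hiso' : Iso u t := hiso
          have hut : Subtree u T := by have h := hb1 j'; rw [hbj] at h; exact h
          have htT : Subtree t T := ha
          rw [subtree_unique T hT hnu hut htT hiso']
    · rw [if_neg hj]; exact (hrest j' hj).symm
  · have hsubcs : Subtree (node cs) T := ha
    have hL : cs.length ≤ D := by
      rcases hDle with ⟨h1, h2⟩
      by_cases he : node cs = T
      · exact h1 cs he.symm
      · have := h2 cs hsubcs he; omega
    set g : Fin D → Option (Fin d) := fun m =>
      if h : ∃ j, ∃ m' : Fin cs.length, idx j = some m' ∧ (m' : ℕ) = (m : ℕ) then some h.choose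
      else none with hg
    refine ⟨.inl g, funext fun j => ?_⟩
    have hbOf : bOf d D (some (node cs)) (Sum.inl g) j =
        if h : ∃ m : Fin D, g m = some j ∧ (m : ℕ) < cs.length then
          some (cs.get ⟨h.choose, h.choose_spec.2⟩) else none := rfl
    have hginv : ∀ (m : Fin D) (j0 : Fin d), g m = some j0 →
        ∃ m' : Fin cs.length, idx j0 = some m' ∧ (m' : ℕ) = (m : ℕ) := by
      intro m j0 hm
      rw [hg] at hm
      dsimp only at hm
      split at hm
      · rename_i h
        obtain ⟨m', hm', hval⟩ := h.choose_spec
        obtain rfl : h.choose = j0 := by injection hm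
        exact ⟨m', hm', hval⟩
      · exact absurd hm (by simp)
    rw [hbOf]
    cases hij : idx j with
    | none =>
      have hbj : b j = none := (hidx1 j).2 hij
      rw [hbj, dif_neg]
      rintro ⟨m, hgm, hlt⟩
      obtain ⟨m', hm', _⟩ := hginv m j hgm
      rw [hij] at hm'; cases hm'
    | some m₀ =>
      obtain ⟨u, hu⟩ : ∃ u, b j = some u := by
        cases hb : b j with
        | none => exact absurd hij (by rw [(hidx1 j).1 hb]; simp)
        | some u => exact ⟨u, rfl⟩
      have hisou : Iso u (cs.get m₀) := hidx2 j u m₀ hu hij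
      have hcond : ∃ m : Fin D, g m = some j ∧ (m : ℕ) < cs.length := by
        refine ⟨⟨(m₀ : ℕ), lt_of_lt_of_le m₀.isLt hL⟩, ?_, m₀.isLt⟩
        rw [hg]; dsimp only
        have hex : ∃ j', ∃ m' : Fin cs.length, idx j' = some m' ∧
            (m' : ℕ) = ((⟨(m₀ : ℕ), lt_of_lt_of_le m₀.isLt hL⟩ : Fin D) : ℕ) := ⟨j, m₀, hij, rfl⟩
        rw [dif_pos hex]
        congr 1
        obtain ⟨m', hm', hval⟩ := hex.choose_spec
        have hmm : m' = m₀ := Fin.ext (by simpa using hval)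
        subst hmm
        exact hidx3 _ j m' hm' hij
      rw [dif_pos hcond]
      obtain ⟨hgm, hlt⟩ := hcond.choose_spec
      obtain ⟨m', hm', hval⟩ := hginv _ j hgm
      rw [hij] at hm'
      obtain rfl : m₀ = m' := by injection hm'
      have huc : Subtree u T := by have h := hb1 j; rw [hu] at h; exact h
      have hgmT : Subtree (cs.get m₀) T :=
        (Subtree.child (cs.get_mem _) (Subtree.refl _)).trans hsubcs
      have hueq : u = cs.get m₀ := subtree_unique T hT hnu huc hgmT hisou
      rw [hu, hueq]
      congr 1
      exact congrArg cs.get (Fin.ext (by simpa using hval.symm))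

theorem arith_bound {d D : ℕ} (hd : 2 ≤ d) (hD : 2 ≤ D) : (d + 1) ^ D + d < (d + 2) ^ D := by
  obtain ⟨E, rfl⟩ : ∃ E, D = E + 2 := ⟨D - 2, by omega⟩
  clear hD
  induction E with
  | zero => ring_nf; nlinarith
  | succ E ih =>
    have h1 : (d + 1) ^ (E + 1 + 2) = (d + 1) ^ (E + 2) * (d + 1) := by ring
    have h2 : (d + 2) ^ (E + 1 + 2) = (d + 2) ^ (E + 2) * (d + 2) := by ring
    have hy : 1 ≤ (d + 2) ^ (E + 2) := Nat.one_le_pow _ _ (by omega)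
    rw [h1, h2]
    nlinarith [ih]

end PTree

/-- Let every node of every tree of `𝒯` have degree at most
`D` (with `D ≥ 2`).  For every sub-forest `𝒜` of `𝒯` and every `2 ≤ d ≤ kD`:
for each `s ≤ k` the number of possible sequences `(ℬ₁⁽ˢ⁾,…,ℬ_d⁽ˢ⁾)` is at
most `(d+1)^D + d`, we have `(d+1)^D + d < (d+2)^D`, and the number of
decompositions `(ℬ₁,…,ℬ_d)` of `𝒜` into `d` sub-forests is less than
`(d+2)^(kD)`. -/
theorem maximum_agreement_supertree_stmt15
    {α : Type} [DecidableEq α] {k D : ℕ} (𝒯 : Fin k → PTree α)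
    (hphylo : ∀ i, (𝒯 i).labelList.Nodup)
    (hnodeg2 : ∀ i, PTree.NoUnaryNodes (𝒯 i))
    (hD : ∀ i, PTree.DegLE D (𝒯 i)) (hD2 : 2 ≤ D)
    (A : Fin k → Option (PTree α))
    (hA : PTree.IsSubForest 𝒯 A)
    (d : ℕ) (hd2 : 2 ≤ d) (hdkD : d ≤ k * D) :
    (∀ s : Fin k, {b : Fin d → Option (PTree α) |
        (∀ j, PTree.OSubtree (𝒯 s) (b j)) ∧ PTree.DecompAt (A s) b}.ncard
          ≤ (d + 1) ^ D + d) ∧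
    ((d + 1) ^ D + d < (d + 2) ^ D) ∧
    {B : Fin d → Fin k → Option (PTree α) |
        PTree.IsDecomposition 𝒯 A d B}.ncard < (d + 2) ^ (k * D) := by
  classical
  have hcardW : Nat.card ((Fin D → Option (Fin d)) ⊕ Fin d) = (d + 1) ^ D + d := by
    simp [Nat.card_eq_fintype_card]
  have key : ∀ s : Fin k, {b : Fin d → Option (PTree α) |
      (∀ j, PTree.OSubtree (𝒯 s) (b j)) ∧ PTree.DecompAt (A s) b} ⊆
        (PTree.bOf d D (A s)) '' Set.univ := by
    intro s b hb
    obtain ⟨w, hw⟩ := PTree.cover (𝒯 s) (hphylo s) (hnodeg2 s) (hD s) (hA.1 s) hb.1 hb.2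
    exact ⟨w, Set.mem_univ _, hw⟩
  have harith : (d + 1) ^ D + d < (d + 2) ^ D := PTree.arith_bound hd2 hD2
  refine ⟨?_, harith, ?_⟩
  · intro s
    calc {b : Fin d → Option (PTree α) |
        (∀ j, PTree.OSubtree (𝒯 s) (b j)) ∧ PTree.DecompAt (A s) b}.ncard
        ≤ ((PTree.bOf d D (A s)) '' Set.univ).ncard :=
          Set.ncard_le_ncard (key s) (Set.finite_univ.image _)
      _ ≤ (Set.univ : Set ((Fin D → Option (Fin d)) ⊕ Fin d)).ncard :=
          Set.ncard_image_le Set.finite_univ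
      _ = (d + 1) ^ D + d := by rw [Set.ncard_univ, hcardW]
  · set H : (Fin k → (Fin D → Option (Fin d)) ⊕ Fin d) →
        (Fin d → Fin k → Option (PTree α)) :=
      fun w j s => PTree.bOf d D (A s) (w s) j with hH
    have hsub : {B : Fin d → Fin k → Option (PTree α) |
        PTree.IsDecomposition 𝒯 A d B} ⊆ H '' Set.univ := by
      intro B hB
      obtain ⟨-, hB1, hB2⟩ := hB
      have hex : ∀ s, ∃ w, PTree.bOf d D (A s) w = fun j => B j s := fun s =>
        PTree.cover (𝒯 s) (hphylo s) (hnodeg2 s) (hD s) (hA.1 s)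
          (fun j => hB1 j s) (hB2 s)
      choose w hw using hex
      exact ⟨w, Set.mem_univ _, funext fun j => funext fun s => congrFun (hw s) j⟩
    have hk0 : k ≠ 0 := by
      rintro rfl
      simp at hdkD
      omega
    calc {B : Fin d → Fin k → Option (PTree α) | PTree.IsDecomposition 𝒯 A d B}.ncard
        ≤ (H '' Set.univ).ncard := Set.ncard_le_ncard hsub (Set.finite_univ.image _)
      _ ≤ (Set.univ : Set (Fin k → (Fin D → Option (Fin d)) ⊕ Fin d)).ncard :=
          Set.ncard_image_le Set.finite_univ
      _ = ((d + 1) ^ D + d) ^ k := by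
          rw [Set.ncard_univ, Nat.card_fun, hcardW, Nat.card_eq_fintype_card,
            Fintype.card_fin]
      _ < ((d + 2) ^ D) ^ k := Nat.pow_lt_pow_left harith hk0
      _ = (d + 2) ^ (k * D) := by rw [← pow_mul, mul_comm]
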